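/- Let E be a finite-dimensional real inner product space, D ⊆ E a linear subspace, W := ♭(D) ⊆ E*, γ : E* → E* the orthogonal projection onto W with respect to ⟪·,·⟫_*, Γ(q,p) := (q, γ(p)), and ω the canonical symplectic form on E × E*. Let V : E → ℝ be smooth and H : E × E* → ℝ, H(q,p) := ½⟪p,p⟫_* + V(q). For m = (q,w) ∈ E × W define the nonholonomic vector X_nh(m) := (♯w, γ(π₂(X_H(m)))) ∈ E × W, i.e., the unique z ∈ E × W such that ω(z,·) − ω(X_H(m),·) vanishes on {0} × E* and restricts on E × {0} to an element of D° (here X_F(x) is the unique element with ω(X_F(x),·) = DF(x), and ♯ = ♭⁻¹). Then for every smooth f : E × W → ℝ and every m ∈ E × W: Df(m)(X_nh(m)) = {f, H|_{E×W}}_E(m), where {f,g}_E(m) := ω(X_{f∘Γ}(m), X_{g∘Γ}(m)) is the Eden bracket. -/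

import Mathlib

open InnerProductSpace

/-- The canonical symplectic form on `E × E*`: `ω((v,α),(w,β)) = β(v) − α(w)`. -/
def canOmega (E : Type*) [NormedAddCommGroup E] [NormedSpace ℝ E] :
    (E × (E →L[ℝ] ℝ)) → (E × (E →L[ℝ] ℝ)) → ℝ :=
  fun x y => y.2 x.1 - x.2 y.1

/-- The inner product `⟪·,·⟫_*` induced on the dual `E*` by the musical isomorphism:
`⟪α,β⟫_* = ⟪♯α, ♯β⟫`. -/
noncomputable def dualInner {E : Type*} [NormedAddCommGroup E] [InnerProductSpace ℝ E]
    [FiniteDimensional ℝ E] (α β : E →L[ℝ] ℝ) : ℝ :=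
  inner ℝ ((InnerProductSpace.toDual ℝ E).symm α) ((InnerProductSpace.toDual ℝ E).symm β)

/-- The Eden bracket on `E × W`:
`{f,g}_E(m) := ω(X_{f∘Γ}(m), X_{g∘Γ}(m))`, with `Γ(q,p) = (q, γ(p))`. -/
noncomputable def edenBracket (E : Type*) [NormedAddCommGroup E] [InnerProductSpace ℝ E]
    [FiniteDimensional ℝ E] (W : Submodule ℝ (E →L[ℝ] ℝ))
    (γ : (E →L[ℝ] ℝ) → (E →L[ℝ] ℝ)) (hγW : ∀ α, γ α ∈ W)
    (XF : (E × (E →L[ℝ] ℝ) → ℝ) → E × (E →L[ℝ] ℝ) → E × (E →L[ℝ] ℝ))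
    (f g : E × ↥W → ℝ) (m : E × ↥W) : ℝ :=
  canOmega E
    (XF (fun x => f (x.1, ⟨γ x.2, hγW x.2⟩)) (m.1, ↑m.2))
    (XF (fun x => g (x.1, ⟨γ x.2, hγW x.2⟩)) (m.1, ↑m.2))

section Aux

open RealInnerProductSpace

variable {E : Type*} [NormedAddCommGroup E] [InnerProductSpace ℝ E] [FiniteDimensional ℝ E]

/-- `ω` is nondegenerate: equal pairings against all vectors force equality. -/
lemma canOmega_inj {z z' : E × (E →L[ℝ] ℝ)}
    (h : ∀ u, canOmega E z u = canOmega E z' u) : z = z' := by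
  have h1 : z.1 = z'.1 := by
    have hb : ∀ β : E →L[ℝ] ℝ, β z.1 = β z'.1 := fun β => by
      simpa [canOmega] using h (0, β)
    have hd := hb (InnerProductSpace.toDual ℝ E (z.1 - z'.1))
    simp only [InnerProductSpace.toDual_apply_apply] at hd
    have : ⟪z.1 - z'.1, z.1 - z'.1⟫ = 0 := by
      rw [inner_sub_right, hd, sub_self]
    exact sub_eq_zero.mp (inner_self_eq_zero.mp this)
  have h2 : z.2 = z'.2 := by
    ext u
    have := h (u, 0)
    simp only [canOmega, ContinuousLinearMap.zero_apply, zero_sub, neg_inj] at this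
    exact this
  exact Prod.ext h1 h2

lemma dualInner_self_eq_zero {α : E →L[ℝ] ℝ} (h : dualInner α α = 0) : α = 0 := by
  have h0 : (InnerProductSpace.toDual ℝ E).symm α = 0 := inner_self_eq_zero.mp h
  have := (InnerProductSpace.toDual ℝ E).symm.injective
    (a₁ := α) (a₂ := 0) (by simpa using h0)
  exact this

lemma dualInner_sub_left (a b c : E →L[ℝ] ℝ) :
    dualInner (a - b) c = dualInner a c - dualInner b c := by
  simp [dualInner, map_sub, inner_sub_left]

end Aux

set_option maxHeartbeats 1000000 in
set_option synthInstance.maxHeartbeats 400000 in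
/-- For the mechanical Hamiltonian `H(q,p) = ½⟪p,p⟫_* + V(q)` and the
nonholonomic vector `X_nh(m) := (♯w, γ(π₂(X_H(m)))) ∈ E × W` at `m = (q,w) ∈ E × W`, the Eden
bracket governs the nonholonomic evolution: for every smooth `f : E × W → ℝ` and every
`m ∈ E × W`, `Df(m)(X_nh(m)) = {f, H|_{E×W}}_E(m)`. -/
theorem eden_bracket_governs_nonholonomic_evolution
    (E : Type*) [NormedAddCommGroup E] [InnerProductSpace ℝ E] [FiniteDimensional ℝ E]
    (D : Submodule ℝ E)
    (W : Submodule ℝ (E →L[ℝ] ℝ))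
    (hW : W = Submodule.map (InnerProductSpace.toDual ℝ E).toLinearEquiv.toLinearMap D)
    -- `γ` is the orthogonal projection of `E*` onto `W` w.r.t. the dual inner product:
    (γ : (E →L[ℝ] ℝ) → (E →L[ℝ] ℝ))
    (hγW : ∀ α, γ α ∈ W)
    (hγorth : ∀ α, ∀ w ∈ W, dualInner (α - γ α) w = 0)
    -- `X_F(x)` is the (unique) Hamiltonian vector of `F` at `x`:
    (XF : (E × (E →L[ℝ] ℝ) → ℝ) → E × (E →L[ℝ] ℝ) → E × (E →L[ℝ] ℝ))
    (hXF : ∀ (F : E × (E →L[ℝ] ℝ) → ℝ) (x : E × (E →L[ℝ] ℝ)), DifferentiableAt ℝ F x →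
      ∀ u, canOmega E (XF F x) u = fderiv ℝ F x u)
    (V : E → ℝ) (hV : ContDiff ℝ (⊤ : ℕ∞) V)
    (H : E × (E →L[ℝ] ℝ) → ℝ)
    (hH : ∀ x : E × (E →L[ℝ] ℝ), H x = (1 / 2 : ℝ) * dualInner x.2 x.2 + V x.1) :
    ∀ f : E × ↥W → ℝ, ContDiff ℝ (⊤ : ℕ∞) f → ∀ m : E × ↥W,
      fderiv ℝ f m
        ((InnerProductSpace.toDual ℝ E).symm ↑m.2,
          (⟨γ ((XF H (m.1, ↑m.2)).2), hγW _⟩ : ↥W)) =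
      edenBracket E W γ hγW XF f (fun m' : E × ↥W => H (m'.1, ↑m'.2)) m := by
  intro f hf m
  classical
  set ι := InnerProductSpace.toDual ℝ E with hι
  -- musical isomorphisms as continuous linear maps
  set sharpL : (E →L[ℝ] ℝ) →L[ℝ] E :=
    ι.symm.toContinuousLinearEquiv.toContinuousLinearMap with hsharpL
  set flatL : E →L[ℝ] (E →L[ℝ] ℝ) :=
    ι.toContinuousLinearEquiv.toContinuousLinearMap with hflatL
  have sharp_apply : ∀ α, sharpL α = ι.symm α := fun _ => rfl
  have flat_apply : ∀ v, flatL v = ι v := fun _ => rfl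
  -- orthogonal projection onto D
  set P : E →L[ℝ] E := D.subtypeL.comp (D.orthogonalProjectionOnto) with hP
  have hPmem : ∀ v, P v ∈ D := fun v => (D.orthogonalProjectionOnto v).2
  have hPfix : ∀ v ∈ D, P v = v := fun v hv => by
    simp [P, Submodule.starProjection_eq_self_iff.mpr hv]
  -- uniqueness of the orthogonal projection γ
  have hγeq : ∀ (α w' : E →L[ℝ] ℝ), w' ∈ W → (∀ u ∈ W, dualInner (α - w') u = 0) →
      γ α = w' := by
    intro α w' hw' horth
    have hd : γ α - w' ∈ W := W.sub_mem (hγW α) hw'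
    have hre : γ α - w' = (α - w') - (α - γ α) := by abel
    have h0 : dualInner (γ α - w') (γ α - w') = 0 := by
      rw [hre, dualInner_sub_left, ← hre, horth _ hd, hγorth α _ hd, sub_zero]
    exact sub_eq_zero.mp (dualInner_self_eq_zero h0)
  -- ♯ maps W into D
  have hsharpW : ∀ u ∈ W, sharpL u ∈ D := by
    intro u hu
    rw [hW] at hu
    obtain ⟨d, hd, rfl⟩ := hu
    simpa [sharp_apply, LinearIsometryEquiv.coe_toLinearEquiv] using hd
  -- explicit formula for γ
  have hγform : ∀ α, γ α = flatL (P (sharpL α)) := by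
    intro α
    refine hγeq α _ ?_ ?_
    · rw [hW]
      exact ⟨P (sharpL α), hPmem _, rfl⟩
    · intro u hu
      have horth := Submodule.sub_starProjection_mem_orthogonal (K := D) (sharpL α)
      have hdiff : sharpL α - P (sharpL α) ∈ Dᗮ := by simpa [P] using horth
      have : dualInner (α - flatL (P (sharpL α))) u
          = ⟪sharpL α - P (sharpL α), sharpL u⟫_ℝ := by
        simp [dualInner, ← hι, flat_apply, sharp_apply, map_sub, ι.symm_apply_apply]
      rw [this, real_inner_comm]
      exact hdiff (sharpL u) (hsharpW u hu)
  -- γ fixes W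
  have hγfix : ∀ w ∈ W, γ w = w := by
    intro w hw
    refine hγeq w w hw ?_
    intro u _
    simp [dualInner]
  -- Γ as a continuous linear map
  set γW : (E →L[ℝ] ℝ) →L[ℝ] W :=
    (flatL.comp (P.comp sharpL)).codRestrict W
      (fun α => hγform α ▸ hγW α) with hγWdef
  set Γclm : (E × (E →L[ℝ] ℝ)) →L[ℝ] (E × ↥W) :=
    (ContinuousLinearMap.fst ℝ E (E →L[ℝ] ℝ)).prod
      (γW.comp (ContinuousLinearMap.snd ℝ E (E →L[ℝ] ℝ))) with hΓdef
  have hΓ : ∀ x : E × (E →L[ℝ] ℝ), Γclm x = (x.1, ⟨γ x.2, hγW x.2⟩) := by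
    intro x
    refine Prod.ext rfl (Subtype.ext ?_)
    exact (hγform x.2).symm
  set x : E × (E →L[ℝ] ℝ) := (m.1, ↑m.2) with hx
  have hΓm : Γclm x = m := by
    rw [hΓ x]
    exact Prod.ext rfl (Subtype.ext (hγfix _ m.2.2))
  -- derivative helper
  have hamDeriv : ∀ (L : (E →L[ℝ] ℝ) →L[ℝ] E),
      ∃ Φ : E × (E →L[ℝ] ℝ) →L[ℝ] ℝ,
        HasFDerivAt (fun y : E × (E →L[ℝ] ℝ) => (1/2 : ℝ) * ⟪L y.2, L y.2⟫_ℝ + V y.1) Φ x ∧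
        ∀ u : E × (E →L[ℝ] ℝ), Φ u = ⟪L x.2, L u.2⟫_ℝ + fderiv ℝ V x.1 u.1 := by
    intro L
    have hS : HasFDerivAt (fun y : E × (E →L[ℝ] ℝ) => L y.2)
        (L.comp (ContinuousLinearMap.snd ℝ E (E →L[ℝ] ℝ))) x :=
      (L.comp (ContinuousLinearMap.snd ℝ E (E →L[ℝ] ℝ))).hasFDerivAt
    have h1 := (HasFDerivAt.inner ℝ hS hS).const_mul (1/2 : ℝ)
    have h2 : HasFDerivAt (fun y : E × (E →L[ℝ] ℝ) => V y.1)
        ((fderiv ℝ V x.1).comp (ContinuousLinearMap.fst ℝ E (E →L[ℝ] ℝ))) x :=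
      ((hV.differentiable (by simp) x.1).hasFDerivAt).comp x
        (ContinuousLinearMap.fst ℝ E (E →L[ℝ] ℝ)).hasFDerivAt
    refine ⟨_, h1.add h2, ?_⟩
    intro u
    simp [fderivInnerCLM_apply, real_inner_comm]
    ring
  -- the candidate Hamiltonian vector
  set zc : E × (E →L[ℝ] ℝ) := (sharpL x.2, -(fderiv ℝ V x.1)) with hzc
  have hzc_omega : ∀ u : E × (E →L[ℝ] ℝ),
      canOmega E zc u = u.2 (sharpL x.2) + fderiv ℝ V x.1 u.1 := by
    intro u
    simp [canOmega, zc]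
  -- pin down X_H x
  have key : ∀ β : E →L[ℝ] ℝ, (ι.symm (γ β) : E) = P (sharpL β) := by
    intro β
    rw [hγform β]
    exact ι.symm_apply_apply _
  have hHfun : H = fun y : E × (E →L[ℝ] ℝ) =>
      (1/2 : ℝ) * ⟪sharpL y.2, sharpL y.2⟫_ℝ + V y.1 := by
    funext y
    rw [hH y]
    rfl
  obtain ⟨ΦH, hΦH, hΦHval⟩ := hamDeriv sharpL
  have hHderiv : HasFDerivAt H ΦH x := by rw [hHfun]; exact hΦH
  have pinH : XF H x = zc := by
    refine canOmega_inj (fun u => ?_)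
    rw [hXF H x hHderiv.differentiableAt u, hHderiv.fderiv, hΦHval u, hzc_omega u]
    congr 1
    rw [real_inner_comm, sharp_apply, sharp_apply, InnerProductSpace.toDual_symm_apply]
  -- the restricted Hamiltonian composed with Γ
  set G : E × (E →L[ℝ] ℝ) → ℝ :=
    fun y => (fun m' : E × ↥W => H (m'.1, ↑m'.2)) (y.1, ⟨γ y.2, hγW y.2⟩) with hGdef
  have hGfun : G = fun y : E × (E →L[ℝ] ℝ) =>
      (1/2 : ℝ) * ⟪(P.comp sharpL) y.2, (P.comp sharpL) y.2⟫_ℝ + V y.1 := by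
    funext y
    show H (y.1, γ y.2) = _
    rw [hH]
    simp only [dualInner]
    rw [key y.2]
    rfl
  obtain ⟨ΦG, hΦG, hΦGval⟩ := hamDeriv (P.comp sharpL)
  have hGderiv : HasFDerivAt G ΦG x := by rw [hGfun]; exact hΦG
  have hx2D : sharpL x.2 ∈ D := hsharpW _ m.2.2
  have pinG : XF G x = zc := by
    refine canOmega_inj (fun u => ?_)
    rw [hXF G x hGderiv.differentiableAt u, hGderiv.fderiv, hΦGval u, hzc_omega u]
    congr 1
    have e1 : ⟪(P.comp sharpL) x.2, (P.comp sharpL) u.2⟫_ℝ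
        = ⟪sharpL x.2, sharpL u.2⟫_ℝ := by
      simp only [ContinuousLinearMap.comp_apply]
      rw [hPfix _ hx2D]
      have := Submodule.inner_starProjection_left_eq_right D (sharpL u.2) (sharpL x.2)
      calc ⟪sharpL x.2, P (sharpL u.2)⟫_ℝ
          = ⟪P (sharpL u.2), sharpL x.2⟫_ℝ := real_inner_comm _ _
        _ = ⟪sharpL u.2, P (sharpL x.2)⟫_ℝ := by simpa [P] using this
        _ = ⟪sharpL u.2, sharpL x.2⟫_ℝ := by rw [hPfix _ hx2D]
        _ = ⟪sharpL x.2, sharpL u.2⟫_ℝ := real_inner_comm _ _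
    rw [e1, real_inner_comm, sharp_apply, sharp_apply, InnerProductSpace.toDual_symm_apply]
  -- the pulled-back observable
  set F : E × (E →L[ℝ] ℝ) → ℝ :=
    fun y => f (y.1, ⟨γ y.2, hγW y.2⟩) with hFdef
  have hFcomp : F = f ∘ Γclm := by
    funext y
    simp [F, Function.comp, hΓ y]
  have hfd : HasFDerivAt f (fderiv ℝ f m) (Γclm x) := by
    rw [hΓm]
    exact (hf.differentiable (by simp) m).hasFDerivAt
  have hFderiv : HasFDerivAt F ((fderiv ℝ f m).comp Γclm) x := by
    rw [hFcomp]
    have hΓd : HasFDerivAt (Γclm : E × (E →L[ℝ] ℝ) → E × ↥W) Γclm x := by exact Γclm.hasFDerivAt (𝕜 := ℝ) (F := E × ↥W) (x := x)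
    exact HasFDerivAt.comp (𝕜 := ℝ) (E := E × (E →L[ℝ] ℝ)) (F := E × ↥W) (G := ℝ) x hfd hΓd
  -- conclude
  have hRHS : edenBracket E W γ hγW XF f (fun m' : E × ↥W => H (m'.1, ↑m'.2)) m
      = canOmega E (XF F x) (XF G x) := rfl
  rw [hRHS, pinG, hXF F x hFderiv.differentiableAt zc, hFderiv.fderiv]
  have hvec : Γclm zc
      = ((ι.symm ↑m.2 : E), (⟨γ ((XF H x).2), hγW _⟩ : ↥W)) := by
    rw [hΓ zc]
    refine Prod.ext ?_ (Subtype.ext ?_)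
    · exact sharp_apply _
    · show γ zc.2 = γ ((XF H x).2)
      rw [pinH]
  simp only [ContinuousLinearMap.comp_apply]
  rw [hvec]
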